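/- For the circle map F(x) = x + 0.1(1 − cos x) on ℝ/2πℤ, the ω-limit set of every point is {0}; hence the Milnor attractor is {0}, but the set {0} is not Lyapunov stable for F. -/

import Mathlib

open Filter Real Topology

/-- The ω-limit set of `x` under iteration of `F`. -/
def omegaSet {X : Type*} [TopologicalSpace X] (F : X → X) (x : X) : Set X :=
  {z | MapClusterPt z atTop fun n : ℕ => F^[n] x}

/-- The circle map `x ↦ x + 0.1 (1 - cos x)` on `ℝ/2πℤ`. -/
noncomputable def circleF : Real.Angle → Real.Angle :=
  fun x => x + ((0.1 * (1 - Real.Angle.cos x) : ℝ) : Real.Angle)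

/-- For `F(x) = x + 0.1(1 - cos x)` on the circle `ℝ/2πℤ`, the ω-limit set of every point
is `{0}` (hence the Milnor attractor is `{0}`), but `{0}` is not Lyapunov stable. -/
noncomputable def ff : ℝ → ℝ := fun x => x + 0.1 * (1 - Real.cos x)

lemma ff_hasDeriv (x : ℝ) : HasDerivAt ff (1 + 0.1 * Real.sin x) x := by
  have h : HasDerivAt (fun x : ℝ => x + 0.1 * (1 - Real.cos x))
      (1 + 0.1 * (0 - (-Real.sin x))) x :=
    (hasDerivAt_id x).add ((((hasDerivAt_const x (1:ℝ)).sub (Real.hasDerivAt_cos x)).const_mul 0.1))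
  exact (by simpa using h : HasDerivAt (fun x : ℝ => x + 0.1 * (1 - Real.cos x)) (1 + 0.1 * Real.sin x) x)

lemma ff_mono : StrictMono ff := by
  apply strictMono_of_deriv_pos
  intro x
  rw [(ff_hasDeriv x).deriv]
  nlinarith [Real.neg_one_le_sin x]

lemma ff_cont : Continuous ff := by unfold ff; fun_prop

lemma le_ff (x : ℝ) : x ≤ ff x := by
  have := Real.cos_le_one x; unfold ff; nlinarith

lemma ff_le (x : ℝ) : ff x ≤ x + 0.2 := by
  have := Real.neg_one_le_cos x; unfold ff; nlinarith

lemma ff_two_pi : ff (2 * π) = 2 * π := by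
  unfold ff; rw [Real.cos_two_pi]; ring

lemma orbit_lt {r : ℝ} (h : r < 2 * π) (n : ℕ) : ff^[n] r < 2 * π := by
  induction n with
  | zero => simpa using h
  | succ n ih =>
    rw [Function.iterate_succ_apply']
    calc ff (ff^[n] r) < ff (2 * π) := ff_mono ih
    _ = 2 * π := ff_two_pi

lemma orbit_mono (r : ℝ) : Monotone (fun n => ff^[n] r) := by
  apply monotone_nat_of_le_succ
  intro n
  rw [Function.iterate_succ_apply']
  exact le_ff _

lemma orbit_tendsto {r : ℝ} (h0 : 0 < r) (h : r < 2 * π) :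
    Tendsto (fun n => ff^[n] r) atTop (𝓝 (2 * π)) := by
  rcases tendsto_of_monotone (orbit_mono r) with ht | ⟨l, hl⟩
  · exfalso
    obtain ⟨n, hn⟩ := (ht.eventually_ge_atTop (2 * π)).exists
    exact absurd hn (not_le.2 (orbit_lt h n))
  have hfl : ff l = l := by
    have h1 : Tendsto (fun n => ff (ff^[n] r)) atTop (𝓝 (ff l)) :=
      (ff_cont.tendsto l).comp hl
    have h2 : Tendsto (fun n => ff (ff^[n] r)) atTop (𝓝 l) := by
      have := hl.comp (tendsto_add_atTop_nat 1)
      simpa only [Function.comp_def, Function.iterate_succ_apply'] using this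
    exact tendsto_nhds_unique h1 h2
  have hcos : Real.cos l = 1 := by unfold ff at hfl; nlinarith
  have hrl : r ≤ l := by
    have := (orbit_mono r).ge_of_tendsto hl 0
    simpa using this
  have hl2 : l ≤ 2 * π := le_of_tendsto hl (Eventually.of_forall fun n => (orbit_lt h n).le)
  obtain ⟨k, hk⟩ := (Real.cos_eq_one_iff l).1 hcos
  have hk1 : k = 1 := by
    have hπ := Real.pi_pos
    have hk0 : (0:ℝ) < k := by nlinarith
    have hk0' : (0:ℤ) < k := by exact_mod_cast hk0
    have hk2 : (k:ℝ) ≤ 1 := by nlinarith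
    have : k ≤ 1 := by exact_mod_cast hk2
    omega
  rw [hk1] at hk
  simp at hk
  rwa [hk]

lemma circleF_coe (x : ℝ) : circleF ↑x = ↑(ff x) := by
  unfold circleF ff
  rw [Real.Angle.cos_coe, ← Real.Angle.coe_add]

lemma circleF_iter (x : ℝ) (n : ℕ) : circleF^[n] ↑x = ↑(ff^[n] x) := by
  induction n with
  | zero => rfl
  | succ n ih => rw [Function.iterate_succ_apply', ih, circleF_coe,
      Function.iterate_succ_apply' ff n x]

lemma circle_orbit_tendsto (θ : Real.Angle) :
    Tendsto (fun n => circleF^[n] θ) atTop (𝓝 0) := by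
  obtain ⟨r, hr0, hr2, hrθ⟩ : ∃ r : ℝ, 0 ≤ r ∧ r < 2 * π ∧ (↑r : Real.Angle) = θ := by
    rcases le_or_gt 0 θ.toReal with h | h
    · exact ⟨θ.toReal, h, lt_of_le_of_lt (Real.Angle.toReal_le_pi θ)
        (by linarith [Real.pi_pos]), θ.coe_toReal⟩
    · refine ⟨θ.toReal + 2 * π, by linarith [Real.Angle.neg_pi_lt_toReal θ, Real.pi_pos],
        by linarith, ?_⟩
      rw [Real.Angle.coe_add, Real.Angle.coe_two_pi, add_zero, θ.coe_toReal]
  subst hrθ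
  rcases eq_or_lt_of_le hr0 with h0 | h0
  · have hfix : ff 0 = 0 := by unfold ff; simp
    have : ∀ n, ff^[n] (0:ℝ) = 0 := fun n =>
      Function.iterate_fixed hfix n
    simp only [circleF_iter, ← h0, this]
    simp
  · have h1 := orbit_tendsto h0 hr2
    have h2 : Tendsto (fun n => (↑(ff^[n] r) : Real.Angle)) atTop (𝓝 ↑(2*π)) :=
      (Real.Angle.continuous_coe.tendsto _).comp h1
    rw [Real.Angle.coe_two_pi] at h2
    simpa only [circleF_iter] using h2

lemma omega_eq (θ : Real.Angle) : omegaSet circleF θ = {0} := by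
  have ht := circle_orbit_tendsto θ
  ext z
  simp only [omegaSet, Set.mem_setOf_eq, Set.mem_singleton_iff]
  constructor
  · intro hz
    have h1 : NeBot (𝓝 z ⊓ map (fun n => circleF^[n] θ) atTop) := hz
    have h2 : 𝓝 z ⊓ map (fun n => circleF^[n] θ) atTop ≤ 𝓝 z ⊓ 𝓝 0 :=
      inf_le_inf_left _ ht
    exact t2_iff_nhds.mp inferInstance (h1.mono h2)
  · rintro rfl
    have : map (fun n => circleF^[n] θ) atTop ≤ 𝓝 0 := ht
    exact ClusterPt.mono (ClusterPt.of_le_nhds this) le_rfl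

lemma unstable : ¬ (∀ U : Set Real.Angle, IsOpen U → (0 : Real.Angle) ∈ U →
    ∃ V : Set Real.Angle, IsOpen V ∧ (0 : Real.Angle) ∈ V ∧
      ∀ x ∈ V, ∀ n : ℕ, circleF^[n] x ∈ U) := by
  intro h
  set A : Set Real.Angle := (fun y : ℝ => (↑y : Real.Angle)) '' Set.Icc π (π + 0.2) with hA
  have hπ3 := Real.pi_gt_three
  have hAclosed : IsClosed A :=
    (isCompact_Icc.image Real.Angle.continuous_coe).isClosed
  have h0A : (0 : Real.Angle) ∉ A := by
    rintro ⟨y, ⟨hy1, hy2⟩, hy0⟩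
    rw [show (0 : Real.Angle) = ((0:ℝ) : Real.Angle) from rfl,
      Real.Angle.angle_eq_iff_two_pi_dvd_sub] at hy0
    obtain ⟨k, hk⟩ := hy0
    rw [sub_zero] at hk
    have hk1 : (0:ℝ) < k := by nlinarith
    have hk2 : (k:ℝ) < 1 := by nlinarith
    have : (0:ℤ) < k := by exact_mod_cast hk1
    have : k < 1 := by exact_mod_cast hk2
    omega
  obtain ⟨V, hVopen, hV0, hVorb⟩ := h Aᶜ hAclosed.isOpen_compl h0A
  have hW : IsOpen ((fun y : ℝ => (↑y : Real.Angle)) ⁻¹' V) :=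
    hVopen.preimage Real.Angle.continuous_coe
  have hW0 : (0:ℝ) ∈ (fun y : ℝ => (↑y : Real.Angle)) ⁻¹' V := by
    simpa using hV0
  obtain ⟨δ, hδ, hball⟩ := Metric.isOpen_iff.mp hW 0 hW0
  set x : ℝ := min (δ / 2) 1 with hx
  have hx0 : 0 < x := lt_min (by linarith) one_pos
  have hx1 : x ≤ 1 := min_le_right _ _
  have hxδ : x < δ := lt_of_le_of_lt (min_le_left _ _) (by linarith)
  have hxV : (↑x : Real.Angle) ∈ V := hball (by
    simp [Real.dist_eq, abs_of_pos hx0, hxδ])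
  have hx2 : x < 2 * π := by linarith
  have htend := orbit_tendsto hx0 hx2
  have hev : ∃ N, π ≤ ff^[N] x :=
    ((htend.eventually (eventually_gt_nhds (show π < 2*π by linarith))).exists).imp
      (fun N hN => hN.le)
  classical
  set n := Nat.find hev with hn
  have hnπ : π ≤ ff^[n] x := Nat.find_spec hev
  have hn0 : n ≠ 0 := by
    intro h0
    rw [h0] at hnπ
    simp only [Function.iterate_zero, id_eq] at hnπ
    linarith
  obtain ⟨m, hm⟩ : ∃ m, n = m + 1 := ⟨n - 1, (Nat.succ_pred_eq_of_ne_zero hn0).symm⟩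
  have hml : ff^[m] x < π := lt_of_not_ge (Nat.find_min hev (by omega))
  have hstep : ff^[n] x = ff (ff^[m] x) := by
    rw [hm, Function.iterate_succ_apply']
  have hub : ff^[n] x ≤ π + 0.2 := by
    rw [hstep]
    calc ff (ff^[m] x) ≤ ff^[m] x + 0.2 := ff_le _
    _ ≤ π + 0.2 := by linarith
  have hmem : circleF^[n] ↑x ∈ A := by
    rw [circleF_iter]
    exact ⟨ff^[n] x, ⟨hnπ, hub⟩, rfl⟩
  exact (hVorb _ hxV n) hmem

theorem stmt7 :
    (∀ x : Real.Angle, omegaSet circleF x = {0}) ∧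
    ¬ (∀ U : Set Real.Angle, IsOpen U → (0 : Real.Angle) ∈ U →
        ∃ V : Set Real.Angle, IsOpen V ∧ (0 : Real.Angle) ∈ V ∧
          ∀ x ∈ V, ∀ n : ℕ, circleF^[n] x ∈ U) := by
  exact ⟨omega_eq, unstable⟩
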